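/- Let G be a probability measure with full support on the probability simplex Γ ⊂ ℝ^N, let s ∈ ℝ^N with s_i > 0, and let x : Γ → ℝ₊^N be an allocation rule satisfying the supply constraint ∫_Γ x dG ≤ s and incentive compatibility θ·x(θ) ≥ θ·x(θ') for all θ, θ'. Then x is uniformly bounded: there exists a constant C such that x_i(θ) ≤ C for all i and all θ ∈ Γ. -/

import Mathlib

open MeasureTheory

/-- A feasible (supply-constrained) incentive-compatible allocation rule on the simplex
is uniformly bounded. -/
theorem feasible_allocation_bounded
    (N : ℕ) (hN : 2 ≤ N)
    (G : Measure (Fin N → ℝ)) [IsProbabilityMeasure G]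
    (hGsupp : G (stdSimplex ℝ (Fin N))ᶜ = 0)
    (hGfull : ∀ U : Set (Fin N → ℝ), IsOpen U →
      (U ∩ stdSimplex ℝ (Fin N)).Nonempty → 0 < G U)
    (s : Fin N → ℝ) (hs : ∀ i, 0 < s i)
    (x : (Fin N → ℝ) → Fin N → ℝ)
    (hx_meas : ∀ i, Measurable fun θ => x θ i)
    (hx_nonneg : ∀ θ ∈ stdSimplex ℝ (Fin N), ∀ i, 0 ≤ x θ i)
    (hsupply : ∀ i, ∫ θ, x θ i ∂G ≤ s i)
    (hIC : ∀ θ ∈ stdSimplex ℝ (Fin N), ∀ θ' ∈ stdSimplex ℝ (Fin N),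
      ∑ i, θ i * x θ' i ≤ ∑ i, θ i * x θ i) :
    ∃ C : ℝ, ∀ i : Fin N, ∀ θ ∈ stdSimplex ℝ (Fin N), x θ i ≤ C := by
  haveI : Nonempty (Fin N) := ⟨⟨0, by omega⟩⟩
  -- total allocation
  set f : (Fin N → ℝ) → ℝ := fun θ => ∑ j, x θ j with hf
  have hf_meas : Measurable f := Finset.measurable_sum _ (fun j _ => hx_meas j)
  -- sets where total allocation exceeds k
  set A : ℕ → Set (Fin N → ℝ) := fun k => {θ | (k : ℝ) < f θ} with hA
  have hA_meas : ∀ k, MeasurableSet (A k) :=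
    fun k => measurableSet_lt measurable_const hf_meas
  have hA_anti : Antitone A := by
    intro k m hkm θ hθ
    exact lt_of_le_of_lt (by exact_mod_cast hkm : (k:ℝ) ≤ m) hθ
  have hA_inter : (⋂ k, A k) = ∅ := by
    ext θ
    simp only [Set.mem_iInter, Set.mem_empty_iff_false, iff_false, not_forall]
    obtain ⟨k, hk⟩ := exists_nat_gt (f θ)
    exact ⟨k, by simp [hA, not_lt.mpr hk.le]⟩
  have hA_tendsto : Filter.Tendsto (fun k => G (A k)) Filter.atTop (nhds 0) := by
    have := MeasureTheory.tendsto_measure_iInter_atTop (μ := G)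
      (fun k => (hA_meas k).nullMeasurableSet) hA_anti ⟨0, measure_ne_top G _⟩
    rwa [hA_inter, measure_empty] at this
  -- per-coordinate bound
  have key : ∀ i : Fin N, ∃ C : ℝ, ∀ θ ∈ stdSimplex ℝ (Fin N), x θ i ≤ C := by
    intro i
    set U : Set (Fin N → ℝ) := {θ | (1:ℝ)/2 < θ i} with hU
    have hUopen : IsOpen U := isOpen_lt continuous_const (continuous_apply i)
    have hne : (U ∩ stdSimplex ℝ (Fin N)).Nonempty := by
      refine ⟨Pi.single i 1, ?_, ?_⟩
      · simp [hU, Pi.single_eq_same]; norm_num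
      · constructor
        · intro j
          by_cases h : j = i <;> simp [Pi.single, Function.update, h]
        · simp [Finset.sum_pi_single']
    have hUpos : 0 < G U := hGfull U hUopen hne
    obtain ⟨k, hk⟩ := (hA_tendsto.eventually_lt_const hUpos).exists
    -- find a good type θ* in U ∩ simplex with f θ* ≤ k
    by_cases hex : ∃ θ, θ ∈ U ∧ θ ∈ stdSimplex ℝ (Fin N) ∧ f θ ≤ (k : ℝ)
    · obtain ⟨θs, hθsU, hθsS, hθsf⟩ := hex
      refine ⟨2 * k, fun θ' hθ' => ?_⟩
      have h1 : x θ' i ≤ 2 * (θs i * x θ' i) := by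
        have hxi := hx_nonneg θ' hθ' i
        have : (1:ℝ)/2 ≤ θs i := le_of_lt hθsU
        nlinarith
      have h2 : θs i * x θ' i ≤ ∑ j, θs j * x θ' j := by
        apply Finset.single_le_sum (f := fun j => θs j * x θ' j)
        · exact fun j _ => mul_nonneg (hθsS.1 j) (hx_nonneg θ' hθ' j)
        · exact Finset.mem_univ i
      have h3 : ∑ j, θs j * x θs j ≤ f θs := by
        apply Finset.sum_le_sum
        intro j _
        have h4 : θs j ≤ 1 := by
          calc θs j ≤ ∑ m, θs m :=
            Finset.single_le_sum (fun m _ => hθsS.1 m) (Finset.mem_univ j)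
          _ = 1 := hθsS.2
        nlinarith [hx_nonneg θs hθsS j, hθsS.1 j]
      have := hIC θs hθsS θ' hθ'
      linarith
    · exfalso
      push_neg at hex
      have hsub : U ⊆ (stdSimplex ℝ (Fin N))ᶜ ∪ A k := by
        intro θ hθ
        by_cases hθS : θ ∈ stdSimplex ℝ (Fin N)
        · exact Or.inr (hex θ hθ hθS)
        · exact Or.inl hθS
      have : G U ≤ G ((stdSimplex ℝ (Fin N))ᶜ ∪ A k) := measure_mono hsub
      have hle : G U ≤ G (A k) := by
        calc G U ≤ G (stdSimplex ℝ (Fin N))ᶜ + G (A k) :=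
          this.trans (measure_union_le _ _)
        _ = G (A k) := by rw [hGsupp, zero_add]
      exact absurd (lt_of_le_of_lt hle hk) (lt_irrefl _)
  choose C hC using key
  refine ⟨Finset.univ.sup' Finset.univ_nonempty C, fun i θ hθ => ?_⟩
  exact le_trans (hC i θ hθ) (Finset.le_sup' C (Finset.mem_univ i))
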